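/- Let m be a positive integer, p > 0, c ∈ ℝ, and let f(x) = c·e^{-p‖x‖^2} on ℝ^m. Then the Heisenberg product for f attains equality: (∫_{ℝ^m} ‖x‖^2 |f(x)|^2 dx) · (∫_{ℝ^m} ‖ξ‖^2 |𝓕f(ξ)|^2 dξ) = (m^2/4) · (∫_{ℝ^m} |f(x)|^2 dx)^2. -/

import Mathlib

open MeasureTheory

section Helpers
open Real Set Filter

lemma integrable_sq_mul_exp {b : ℝ} (hb : 0 < b) :
    Integrable (fun x : ℝ => x ^ 2 * Real.exp (-b * x ^ 2)) := by
  have := integrable_rpow_mul_exp_neg_mul_sq hb (s := 2) (by norm_num)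
  simpa [Real.rpow_natCast] using this

lemma tendsto_mul_exp_top {b : ℝ} (hb : 0 < b) :
    Tendsto (fun x : ℝ => x * Real.exp (-b * x ^ 2)) atTop (nhds 0) := by
  have h := rpow_mul_exp_neg_mul_sq_isLittleO_exp_neg hb 1
  have h' : (fun x : ℝ => x * Real.exp (-b * x ^ 2)) =ᶠ[atTop]
      (fun x : ℝ => x ^ (1:ℝ) * Real.exp (-b * x ^ 2)) := by
    filter_upwards [eventually_ge_atTop (0:ℝ)] with x hx
    rw [Real.rpow_one]
  have hexp : Tendsto (fun x : ℝ => Real.exp (-(1/2) * x)) atTop (nhds 0) := by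
    have := Real.tendsto_exp_neg_atTop_nhds_zero.comp
      (tendsto_id.const_mul_atTop (by norm_num : (0:ℝ) < 1/2))
    simpa [Function.comp_def, neg_mul] using this
  have := h.trans_tendsto hexp
  exact (Tendsto.congr' h'.symm this)

lemma integral_sq_mul_exp {b : ℝ} (hb : 0 < b) :
    ∫ x : ℝ, x ^ 2 * Real.exp (-b * x ^ 2) = Real.sqrt (π / b) / (2 * b) := by
  set g : ℝ → ℝ := fun x => x * Real.exp (-b * x ^ 2) with hg
  set h : ℝ → ℝ := fun x => Real.exp (-b * x ^ 2) - 2 * b * (x ^ 2 * Real.exp (-b * x ^ 2)) with hh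
  have hderiv : ∀ x : ℝ, HasDerivAt g (h x) x := by
    intro x
    have h1 : HasDerivAt (fun x : ℝ => -b * x ^ 2) (-b * (2 * x)) x := by
      simpa using ((hasDerivAt_pow 2 x).const_mul (-b))
    have h2 := (h1.exp).const_mul 1
    have := (hasDerivAt_id' x).mul h1.exp
    exact this.congr_deriv (by simp only [hh]; ring)
  have hint : Integrable h :=
    (integrable_exp_neg_mul_sq hb).sub ((integrable_sq_mul_exp hb).const_mul _)
  have htop : Tendsto g atTop (nhds 0) := tendsto_mul_exp_top hb
  have hbot : Tendsto g atBot (nhds 0) := by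
    have : Tendsto (fun x : ℝ => g (-x)) atTop (nhds 0) := by
      have : (fun x : ℝ => g (-x)) = fun x => -(g x) := by
        funext x; simp [hg, neg_sq, neg_mul]
      rw [this]
      simpa using htop.neg
    have := this.comp tendsto_neg_atBot_atTop
    simpa [Function.comp_def] using this
  have hIoi : ∫ x in Ioi (0:ℝ), h x = 0 - g 0 :=
    integral_Ioi_of_hasDerivAt_of_tendsto' (fun x _ => hderiv x) hint.integrableOn htop
  have hIic : ∫ x in Iic (0:ℝ), h x = g 0 - 0 :=
    integral_Iic_of_hasDerivAt_of_tendsto' (fun x _ => hderiv x) hint.integrableOn hbot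
  have htot : ∫ x : ℝ, h x = 0 := by
    rw [← intervalIntegral.integral_Iic_add_Ioi hint.integrableOn hint.integrableOn, hIoi, hIic]; ring
  have := integral_sub (integrable_exp_neg_mul_sq hb) ((integrable_sq_mul_exp hb).const_mul (2*b))
  rw [hh] at htot
  rw [integral_sub (integrable_exp_neg_mul_sq hb) ((integrable_sq_mul_exp hb).const_mul (2*b)),
    MeasureTheory.integral_const_mul, integral_gaussian, sub_eq_zero] at htot
  field_simp at htot ⊢
  linarith [htot]




lemma integral_norm_sq_mul_exp (m : ℕ) {a : ℝ} (ha : 0 < a) :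
    ∫ x : EuclideanSpace ℝ (Fin m), ‖x‖ ^ 2 * Real.exp (-a * ‖x‖ ^ 2)
      = ((m : ℝ) / (2 * a)) * (π / a) ^ ((m : ℝ) / 2) := by
  have hmp := (EuclideanSpace.volume_preserving_symm_measurableEquiv_toLp (Fin m)).symm
  rw [← hmp.integral_comp (MeasurableEquiv.measurableEmbedding _)]
  have hnorm : ∀ v : Fin m → ℝ,
      ‖(MeasurableEquiv.toLp 2 (Fin m → ℝ)).symm.symm v‖ ^ 2 = ∑ i, v i ^ 2 := by
    intro v
    rw [EuclideanSpace.norm_eq, Real.sq_sqrt (Finset.sum_nonneg fun i _ => by positivity)]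
    simp [sq_abs]
  set G : Fin m → Fin m → ℝ → ℝ :=
    fun i j t => (if j = i then t ^ 2 else 1) * Real.exp (-a * t ^ 2) with hG
  have hGint : ∀ i j, Integrable (G i j) := by
    intro i j
    rcases eq_or_ne j i with h | h
    · simpa [hG, h] using integrable_sq_mul_exp ha
    · simpa [hG, h] using integrable_exp_neg_mul_sq ha
  have key : ∀ v : Fin m → ℝ,
      ‖(MeasurableEquiv.toLp 2 (Fin m → ℝ)).symm.symm v‖ ^ 2 *
        Real.exp (-a * ‖(MeasurableEquiv.toLp 2 (Fin m → ℝ)).symm.symm v‖ ^ 2)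
      = ∑ i, ∏ j, G i j (v j) := by
    intro v
    rw [hnorm, show -a * ∑ i, v i ^ 2 = ∑ i, -a * v i ^ 2 from Finset.mul_sum ..,
      Real.exp_sum, Finset.sum_mul]
    congr 1 with i
    rw [hG]
    simp only []
    rw [Finset.prod_mul_distrib, Finset.prod_ite_eq' Finset.univ i (fun j => v j ^ 2)]
    simp
  simp only [Function.comp_def, key]
  rw [integral_finset_sum (μ := volume) _ (fun i _ => Integrable.fintype_prod (fun j => hGint i j))]
  have hterm : ∀ i : Fin m, (∫ v : Fin m → ℝ, ∏ j, G i j (v j))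
      = Real.sqrt (π / a) / (2 * a) * Real.sqrt (π / a) ^ (m - 1) := by
    intro i
    rw [MeasureTheory.integral_fintype_prod_volume_eq_prod]
    rw [← Finset.mul_prod_erase Finset.univ _ (Finset.mem_univ i)]
    have h1 : ∫ t : ℝ, G i i t = Real.sqrt (π / a) / (2 * a) := by
      simp only [hG, if_pos rfl]
      exact integral_sq_mul_exp ha
    have h2 : ∀ j ∈ Finset.univ.erase i, (∫ t : ℝ, G i j t) = Real.sqrt (π / a) := by
      intro j hj
      have := Finset.ne_of_mem_erase hj
      simp only [hG, if_neg this, one_mul]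
      rw [integral_gaussian]
    rw [h1, Finset.prod_congr rfl h2, Finset.prod_const]
    congr 2
    rw [Finset.card_erase_of_mem (Finset.mem_univ i)]
    simp
  rw [Finset.sum_congr rfl (fun i _ => hterm i), Finset.sum_const, Finset.card_univ,
    Fintype.card_fin, nsmul_eq_mul]
  rcases Nat.eq_zero_or_pos m with rfl | hm
  · simp
  have hpa : (0:ℝ) < π / a := div_pos pi_pos ha
  have hpow : Real.sqrt (π / a) * Real.sqrt (π / a) ^ (m - 1) = (π / a) ^ ((m : ℝ) / 2) := by
    rw [← pow_succ', Nat.sub_add_cancel hm, Real.sqrt_eq_rpow, ← Real.rpow_natCast _ m,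
      ← Real.rpow_mul hpa.le]
    ring_nf
  rw [← hpow]
  ring

end Helpers

/-- The Fourier transform on `ℝ^m` with the normalization
`𝓕f(ξ) = (2π)^{-m/2} ∫ f(x) e^{-i⟨x,ξ⟩} dx`. -/
noncomputable def fourierTransformEuclid (m : ℕ)
    (f : EuclideanSpace ℝ (Fin m) → ℂ) (ξ : EuclideanSpace ℝ (Fin m)) : ℂ :=
  ((2 * Real.pi) ^ (-(m : ℝ) / 2) : ℝ) *
    ∫ x : EuclideanSpace ℝ (Fin m),
      Complex.exp (-Complex.I * ((inner ℝ x ξ : ℝ) : ℂ)) * f x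

section Main
open Real Set Filter
theorem stmt_3 (m : ℕ) (hm : 0 < m) (p : ℝ) (hp : 0 < p) (c : ℝ)
    (f : EuclideanSpace ℝ (Fin m) → ℂ)
    (hf : ∀ x, f x = (c : ℂ) * Complex.exp (-(p : ℂ) * (‖x‖ : ℂ) ^ 2)) :
    (∫ x : EuclideanSpace ℝ (Fin m), ‖x‖ ^ 2 * ‖f x‖ ^ 2) *
      (∫ ξ : EuclideanSpace ℝ (Fin m), ‖ξ‖ ^ 2 * ‖fourierTransformEuclid m f ξ‖ ^ 2) =
    ((m : ℝ) ^ 2 / 4) * (∫ x : EuclideanSpace ℝ (Fin m), ‖f x‖ ^ 2) ^ 2 := by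
  have h2p : (0:ℝ) < 2 * p := by linarith
  -- pointwise norm of f
  have hfn : ∀ x : EuclideanSpace ℝ (Fin m),
      ‖f x‖ ^ 2 = c ^ 2 * Real.exp (-(2*p) * ‖x‖ ^ 2) := by
    intro x
    rw [hf x, norm_mul, Complex.norm_real, Real.norm_eq_abs,
      Complex.norm_exp]
    have : (-(p:ℂ) * (‖x‖:ℂ) ^ 2) = ((-p * ‖x‖ ^ 2 : ℝ) : ℂ) := by push_cast; ring
    rw [this, Complex.ofReal_re, mul_pow, sq_abs, ← Real.exp_nat_mul]
    ring_nf
  -- the Fourier transform of f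
  have hFT : ∀ ξ : EuclideanSpace ℝ (Fin m), fourierTransformEuclid m f ξ =
      (((2 * π) ^ (-(m:ℝ)/2) : ℝ) : ℂ) * c *
        ((π / (p:ℂ)) ^ ((m:ℝ)/2 : ℂ) * Complex.exp (-(‖ξ‖^2 / (4*p) : ℝ) : ℂ)) := by
    intro ξ
    rw [fourierTransformEuclid]
    have hint : ∀ x : EuclideanSpace ℝ (Fin m),
        Complex.exp (-Complex.I * ((inner ℝ x ξ : ℝ) : ℂ)) * f x
        = (c:ℂ) * Complex.exp (-(p:ℂ) * ‖x‖^2 + (-Complex.I) * ((inner ℝ ξ x : ℝ):ℂ)) := by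
      intro x
      rw [hf x, real_inner_comm ξ x, Complex.exp_add]
      push_cast
      ring
    simp_rw [hint]
    rw [MeasureTheory.integral_const_mul,
      GaussianFourier.integral_cexp_neg_mul_sq_norm_add (by simpa using hp) (-Complex.I) ξ]
    have hrank : ((Module.finrank ℝ (EuclideanSpace ℝ (Fin m)) : ℂ)) / 2 = ((m:ℝ)/2 : ℂ) := by
      rw [finrank_euclideanSpace_fin]
      push_cast
      ring
    rw [hrank]
    have harg : (-Complex.I) ^ 2 * (‖ξ‖:ℂ)^2 / (4 * (p:ℂ)) = (-(‖ξ‖^2 / (4*p) : ℝ) : ℂ) := by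
      rw [neg_pow, Complex.I_sq]
      push_cast
      ring
    rw [harg]
    ring
  -- pointwise norm of the Fourier transform
  have hFn : ∀ ξ : EuclideanSpace ℝ (Fin m), ‖fourierTransformEuclid m f ξ‖ ^ 2 =
      ((2*π) ^ (-(m:ℝ)) * c^2 * (π/p) ^ ((m:ℝ))) * Real.exp (-(1/(2*p)) * ‖ξ‖^2) := by
    intro ξ
    rw [hFT ξ]
    rw [norm_mul, norm_mul, norm_mul]
    have h1 : ‖(((2 * π) ^ (-(m:ℝ)/2) : ℝ) : ℂ)‖ = (2*π) ^ (-(m:ℝ)/2) := by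
      rw [Complex.norm_real, Real.norm_eq_abs, abs_of_pos (Real.rpow_pos_of_pos (by positivity) _)]
    have h2 : ‖((c:ℝ):ℂ)‖ = |c| := by rw [Complex.norm_real, Real.norm_eq_abs]
    have h3 : ‖(π / (p:ℂ)) ^ ((m:ℝ)/2 : ℂ)‖ = (π/p) ^ ((m:ℝ)/2) := by
      have : (π / (p:ℂ)) = (((π/p : ℝ)):ℂ) := by push_cast; ring
      rw [this, Complex.norm_cpow_eq_rpow_re_of_pos (by positivity)]
      norm_num
    have h4 : ‖Complex.exp (-(‖ξ‖^2 / (4*p) : ℝ) : ℂ)‖ = Real.exp (-(‖ξ‖^2 / (4*p))) := by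
      rw [Complex.norm_exp, Complex.neg_re, Complex.ofReal_re]
    rw [h1, h2, h3, h4]
    rw [mul_pow, mul_pow, mul_pow, sq_abs]
    rw [← Real.rpow_natCast ((2*π) ^ (-(m:ℝ)/2)) 2, ← Real.rpow_natCast ((π/p) ^ ((m:ℝ)/2)) 2,
      ← Real.rpow_mul (by positivity), ← Real.rpow_mul (by positivity),
      ← Real.exp_nat_mul]
    norm_num
    ring_nf
  -- the three integrals
  have hI3 : ∫ x : EuclideanSpace ℝ (Fin m), ‖f x‖ ^ 2 = c^2 * (π/(2*p)) ^ ((m:ℝ)/2) := by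
    simp_rw [hfn]
    rw [MeasureTheory.integral_const_mul, GaussianFourier.integral_rexp_neg_mul_sq_norm h2p]
    rw [finrank_euclideanSpace_fin]
  have hI1 : ∫ x : EuclideanSpace ℝ (Fin m), ‖x‖ ^ 2 * ‖f x‖ ^ 2
      = c^2 * (((m:ℝ) / (4*p)) * (π/(2*p)) ^ ((m:ℝ)/2)) := by
    have h : ∀ x : EuclideanSpace ℝ (Fin m),
        ‖x‖ ^ 2 * ‖f x‖ ^ 2 = c^2 * (‖x‖^2 * Real.exp (-(2*p) * ‖x‖^2)) := by
      intro x; rw [hfn x]; ring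
    simp_rw [h]
    rw [MeasureTheory.integral_const_mul, integral_norm_sq_mul_exp m h2p,
      show (2*(2*p):ℝ) = 4*p from by ring]
  have h2p' : (0:ℝ) < 1/(2*p) := by positivity
  have hI2 : ∫ ξ : EuclideanSpace ℝ (Fin m), ‖ξ‖ ^ 2 * ‖fourierTransformEuclid m f ξ‖ ^ 2
      = ((2*π) ^ (-(m:ℝ)) * c^2 * (π/p) ^ ((m:ℝ))) *
        (((m:ℝ) / (2 * (1/(2*p)))) * (π / (1/(2*p))) ^ ((m:ℝ)/2)) := by
    have h : ∀ ξ : EuclideanSpace ℝ (Fin m), ‖ξ‖ ^ 2 * ‖fourierTransformEuclid m f ξ‖ ^ 2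
        = ((2*π) ^ (-(m:ℝ)) * c^2 * (π/p) ^ ((m:ℝ))) *
          (‖ξ‖^2 * Real.exp (-(1/(2*p)) * ‖ξ‖^2)) := by
      intro ξ; rw [hFn ξ]; ring
    simp_rw [h]
    rw [MeasureTheory.integral_const_mul, integral_norm_sq_mul_exp m h2p']
  rw [hI1, hI2, hI3]
  -- final algebra
  have key : (2*π) ^ (-(m:ℝ)) * (π/p) ^ ((m:ℝ)) * (π / (1/(2*p))) ^ ((m:ℝ)/2)
      = (π/(2*p)) ^ ((m:ℝ)/2) := by
    have e1 : (π / (1/(2*p)) : ℝ) = (π/(2*p)) * ((2*p)*(2*p)) := by field_simp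
    have e2 : ((π/(2*p)) * ((2*p)*(2*p)) : ℝ) ^ ((m:ℝ)/2)
        = (π/(2*p)) ^ ((m:ℝ)/2) * ((2*p) ^ ((m:ℝ)/2) * (2*p) ^ ((m:ℝ)/2)) := by
      rw [Real.mul_rpow (by positivity) (by positivity),
        Real.mul_rpow (by positivity) (by positivity)]
    have e3 : ((2*p) ^ ((m:ℝ)/2) * (2*p) ^ ((m:ℝ)/2) : ℝ) = (2*p) ^ ((m:ℝ)) := by
      rw [← Real.rpow_add (by positivity)]; norm_num
    rw [e1, e2, e3]
    have hone : (2*π:ℝ) ^ (-(m:ℝ)) * ((π/p) ^ ((m:ℝ)) * (2*p) ^ ((m:ℝ))) = 1 := by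
      rw [← Real.mul_rpow (by positivity) (by positivity),
        show ((π/p) * (2*p) : ℝ) = 2*π from by field_simp,
        Real.rpow_neg (by positivity)]
      exact inv_mul_cancel₀ (ne_of_gt (Real.rpow_pos_of_pos (by positivity) _))
    calc (2*π) ^ (-(m:ℝ)) * (π/p) ^ ((m:ℝ)) * ((π/(2*p)) ^ ((m:ℝ)/2) * (2*p) ^ ((m:ℝ)))
        = ((2*π) ^ (-(m:ℝ)) * ((π/p) ^ ((m:ℝ)) * (2*p) ^ ((m:ℝ)))) * (π/(2*p)) ^ ((m:ℝ)/2) := by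
          ring
      _ = (π/(2*p)) ^ ((m:ℝ)/2) := by rw [hone, one_mul]
  calc c ^ 2 * ((m:ℝ) / (4 * p) * (π / (2 * p)) ^ ((m:ℝ) / 2)) *
      ((2 * π) ^ (-(m:ℝ)) * c ^ 2 * (π / p) ^ ((m:ℝ)) *
        ((m:ℝ) / (2 * (1 / (2 * p))) * (π / (1 / (2 * p))) ^ ((m:ℝ) / 2)))
      = (c ^ 2 * c ^ 2) * ((m:ℝ) / (4 * p) * ((m:ℝ) / (2 * (1 / (2 * p))))) *
        ((2 * π) ^ (-(m:ℝ)) * (π / p) ^ ((m:ℝ)) * (π / (1 / (2 * p))) ^ ((m:ℝ) / 2) *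
          (π / (2 * p)) ^ ((m:ℝ) / 2)) := by ring
    _ = (c ^ 2 * c ^ 2) * ((m:ℝ) / (4 * p) * ((m:ℝ) / (2 * (1 / (2 * p))))) *
        ((π / (2 * p)) ^ ((m:ℝ) / 2) * (π / (2 * p)) ^ ((m:ℝ) / 2)) := by rw [key]
    _ = (m:ℝ) ^ 2 / 4 * (c ^ 2 * (π / (2 * p)) ^ ((m:ℝ) / 2)) ^ 2 := by
        field_simp

end Main
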